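/- For every real c > 0 and every integer w ≥ 3, the free energy on the symmetric zero-force curve a = b = c+1 is independent of the width: κ_w(c+1, c+1, c) = log(c+1). -/

import Mathlib

open Filter
open scoped Classical

noncomputable section

/-- Step value of a Boolean step: `true` is an up step (+1), `false` a down step (−1). -/
def stepVal (x : Bool) : ℤ := if x then 1 else -1

/-- Height of the walk after `k` steps. -/
def ht (σ : ℕ → Bool) (k : ℕ) : ℤ := ∑ i ∈ Finset.range k, stepVal (σ i)

/-- Extend a finite sequence of steps to `ℕ → Bool`. -/
def extFun {n : ℕ} (σ : Fin n → Bool) : ℕ → Bool :=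
  fun i => if h : i < n then σ ⟨i, h⟩ else false

/-- The first `n` steps of `σ` stay in the strip `0 ≤ y ≤ w`. -/
def IsWalk (w n : ℕ) (σ : ℕ → Bool) : Prop :=
  ∀ k ≤ n, 0 ≤ ht σ k ∧ ht σ k ≤ (w : ℤ)

/-- Number of contacts with the bottom wall (excluding the origin):
`m_a(φ) = #{1 ≤ k ≤ n : h_k = 0}`. -/
def ma (n : ℕ) (σ : ℕ → Bool) : ℕ :=
  ((Finset.Icc 1 n).filter (fun k => ht σ k = 0)).card

/-- Number of contacts with the top wall: `m_b(φ) = #{1 ≤ k ≤ n : h_k = w}`. -/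
def mb (w n : ℕ) (σ : ℕ → Bool) : ℕ :=
  ((Finset.Icc 1 n).filter (fun k => ht σ k = (w : ℤ))).card

/-- Number of stiffness points: `m_c(φ) = #{1 ≤ k ≤ n−1 : σ_k = σ_{k+1}}`. -/
def mc (n : ℕ) (σ : ℕ → Bool) : ℕ :=
  ((Finset.range (n - 1)).filter (fun i => σ i = σ (i + 1))).card

/-- Boltzmann weight of a walk: `W(φ) = a^{m_a} b^{m_b} c^{m_c}`. -/
def wt (w n : ℕ) (a b c : ℝ) (σ : ℕ → Bool) : ℝ :=
  a ^ ma n σ * b ^ mb w n σ * c ^ mc n σ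

/-- Partition function `Z_{w,n}(a,b,c)`: sum of weights over all walks of length `n`
in the strip of width `w`. -/
def Z (w n : ℕ) (a b c : ℝ) : ℝ :=
  ∑ σ ∈ Finset.univ.filter (fun σ : Fin n → Bool => IsWalk w n (extFun σ)),
    wt w n a b c (extFun σ)

/-- Fixed-endpoint partition function `Z_{w,n,h}(a,b,c)`: sum over walks of length `n`
in the strip of width `w` ending at height `h`. -/
def Zh (w n h : ℕ) (a b c : ℝ) : ℝ :=
  ∑ σ ∈ Finset.univ.filter
      (fun σ : Fin n → Bool => IsWalk w n (extFun σ) ∧ ht (extFun σ) n = (h : ℤ)),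
    wt w n a b c (extFun σ)

end

noncomputable section Aux

/-- The right Perron eigenvector of the transfer matrix on the zero-force curve. -/
def rvec (c : ℝ) (w : ℕ) (h : ℤ) (s : Bool) : ℝ :=
  if h = 0 ∧ s = true then c / (c + 1)
  else if h = (w : ℤ) ∧ s = false then c / (c + 1)
  else if h = 0 ∨ h = (w : ℤ) then 1 / (c + 1)
  else 1

/-- Refined partition function weighted by the eigenvector. -/
def G (c : ℝ) (w n : ℕ) : ℝ :=
  ∑ σ : Fin (n + 1) → Bool,
    if IsWalk w (n + 1) (extFun σ) then
      wt w (n + 1) (c + 1) (c + 1) c (extFun σ)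
        * rvec c w (ht (extFun σ) (n + 1)) (extFun σ n)
    else 0

lemma extFun_snoc_of_lt {n : ℕ} (τ : Fin n → Bool) (s : Bool) {i : ℕ} (hi : i < n) :
    extFun (Fin.snoc τ s) i = extFun τ i := by
  simp only [extFun, dif_pos hi, dif_pos (hi.trans (Nat.lt_succ_self n))]
  exact Fin.snoc_castSucc (α := fun _ => Bool) (p := τ) (x := s) (i := ⟨i, hi⟩)

lemma extFun_snoc_self {n : ℕ} (τ : Fin n → Bool) (s : Bool) :
    extFun (Fin.snoc τ s) n = s := by
  simp only [extFun, dif_pos (Nat.lt_succ_self n)]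
  exact Fin.snoc_last (α := fun _ => Bool) (x := s) (p := τ)

lemma ht_snoc {n : ℕ} (τ : Fin n → Bool) (s : Bool) {k : ℕ} (hk : k ≤ n) :
    ht (extFun (Fin.snoc τ s)) k = ht (extFun τ) k := by
  unfold ht
  refine Finset.sum_congr rfl fun i hi => ?_
  rw [extFun_snoc_of_lt τ s (lt_of_lt_of_le (Finset.mem_range.1 hi) hk)]

lemma ht_succ (σ : ℕ → Bool) (k : ℕ) : ht σ (k + 1) = ht σ k + stepVal (σ k) :=
  Finset.sum_range_succ _ _

lemma isWalk_snoc {w n : ℕ} (τ : Fin n → Bool) (s : Bool) :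
    IsWalk w (n + 1) (extFun (Fin.snoc τ s)) ↔
      IsWalk w n (extFun τ) ∧
        (0 ≤ ht (extFun τ) n + stepVal s ∧ ht (extFun τ) n + stepVal s ≤ (w : ℤ)) := by
  constructor
  · intro H
    refine ⟨fun k hk => by rw [← ht_snoc τ s hk]; exact H k (hk.trans (Nat.le_succ n)), ?_⟩
    have := H (n + 1) le_rfl
    rwa [ht_succ, ht_snoc τ s le_rfl, extFun_snoc_self] at this
  · rintro ⟨H, h1, h2⟩ k hk
    rcases Nat.lt_succ_iff_lt_or_eq.1 (Nat.lt_succ_of_le hk) with h | h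
    · rw [ht_snoc τ s (Nat.lt_succ_iff.1 h)]
      exact H k (Nat.lt_succ_iff.1 h)
    · subst h
      rw [ht_succ, ht_snoc τ s le_rfl, extFun_snoc_self]
      exact ⟨h1, h2⟩

lemma Icc_split (n : ℕ) : Finset.Icc 1 (n + 1) = insert (n + 1) (Finset.Icc 1 n) := by
  ext k; simp [Finset.mem_Icc, Finset.mem_insert]; omega

lemma ma_snoc {n : ℕ} (τ : Fin n → Bool) (s : Bool) :
    ma (n + 1) (extFun (Fin.snoc τ s)) =
      ma n (extFun τ) + (if ht (extFun τ) n + stepVal s = 0 then 1 else 0) := by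
  unfold ma
  rw [Icc_split, Finset.filter_insert]
  have hnot : (n + 1) ∉ Finset.Icc 1 n := by simp
  have hcongr : (Finset.Icc 1 n).filter (fun k => ht (extFun (Fin.snoc τ s)) k = 0)
      = (Finset.Icc 1 n).filter (fun k => ht (extFun τ) k = 0) := by
    apply Finset.filter_congr
    intro k hk
    rw [ht_snoc τ s (Finset.mem_Icc.1 hk).2]
  have hval : ht (extFun (Fin.snoc τ s)) (n + 1) = ht (extFun τ) n + stepVal s := by
    rw [ht_succ, ht_snoc τ s le_rfl, extFun_snoc_self]
  by_cases h : ht (extFun τ) n + stepVal s = 0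
  · rw [if_pos (by rw [hval]; exact h), if_pos h,
      Finset.card_insert_of_notMem (fun hm => hnot (Finset.mem_of_mem_filter _ hm)), hcongr]
  · rw [if_neg (by rw [hval]; exact h), if_neg h, hcongr, Nat.add_zero]

lemma mb_snoc {w n : ℕ} (τ : Fin n → Bool) (s : Bool) :
    mb w (n + 1) (extFun (Fin.snoc τ s)) =
      mb w n (extFun τ) + (if ht (extFun τ) n + stepVal s = (w : ℤ) then 1 else 0) := by
  unfold mb
  rw [Icc_split, Finset.filter_insert]
  have hnot : (n + 1) ∉ Finset.Icc 1 n := by simp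
  have hcongr : (Finset.Icc 1 n).filter (fun k => ht (extFun (Fin.snoc τ s)) k = (w : ℤ))
      = (Finset.Icc 1 n).filter (fun k => ht (extFun τ) k = (w : ℤ)) := by
    apply Finset.filter_congr
    intro k hk
    rw [ht_snoc τ s (Finset.mem_Icc.1 hk).2]
  have hval : ht (extFun (Fin.snoc τ s)) (n + 1) = ht (extFun τ) n + stepVal s := by
    rw [ht_succ, ht_snoc τ s le_rfl, extFun_snoc_self]
  by_cases h : ht (extFun τ) n + stepVal s = (w : ℤ)
  · rw [if_pos (by rw [hval]; exact h), if_pos h,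
      Finset.card_insert_of_notMem (fun hm => hnot (Finset.mem_of_mem_filter _ hm)), hcongr]
  · rw [if_neg (by rw [hval]; exact h), if_neg h, hcongr, Nat.add_zero]

lemma mc_snoc {n : ℕ} (τ : Fin (n + 1) → Bool) (s : Bool) :
    mc (n + 2) (extFun (Fin.snoc τ s)) =
      mc (n + 1) (extFun τ) + (if extFun τ n = s then 1 else 0) := by
  unfold mc
  rw [show n + 2 - 1 = n + 1 from rfl, show n + 1 - 1 = n from rfl, Finset.range_add_one, Finset.filter_insert]
  have hnot : n ∉ Finset.range n := by simp
  have hcongr : (Finset.range n).filter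
        (fun i => extFun (Fin.snoc τ s) i = extFun (Fin.snoc τ s) (i + 1))
      = (Finset.range n).filter (fun i => extFun τ i = extFun τ (i + 1)) := by
    apply Finset.filter_congr
    intro i hi
    have hi' : i < n := Finset.mem_range.1 hi
    rw [extFun_snoc_of_lt τ s (hi'.trans (Nat.lt_succ_self n)),
      extFun_snoc_of_lt τ s (Nat.succ_lt_succ hi')]
  have h1 : extFun (Fin.snoc τ s) n = extFun τ n :=
    extFun_snoc_of_lt τ s (Nat.lt_succ_self n)
  have h2 : extFun (Fin.snoc τ s) (n + 1) = s := extFun_snoc_self τ s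
  by_cases h : extFun τ n = s
  · rw [if_pos (by rw [h1, h2]; exact h), if_pos h,
      Finset.card_insert_of_notMem (fun hm => hnot (Finset.mem_of_mem_filter _ hm)), hcongr]
  · rw [if_neg (by rw [h1, h2]; exact h), if_neg h, hcongr]
    omega

lemma wt_snoc {w n : ℕ} (c : ℝ) (τ : Fin (n + 1) → Bool) (s : Bool) :
    wt w (n + 2) (c + 1) (c + 1) c (extFun (Fin.snoc τ s)) =
      wt w (n + 1) (c + 1) (c + 1) c (extFun τ)
        * ((if ht (extFun τ) (n + 1) + stepVal s = 0 then c + 1 else 1)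
          * (if ht (extFun τ) (n + 1) + stepVal s = (w : ℤ) then c + 1 else 1)
          * (if extFun τ n = s then c else 1)) := by
  unfold wt
  rw [ma_snoc τ s, mb_snoc τ s, mc_snoc τ s, pow_add, pow_add, pow_add]
  by_cases h1 : ht (extFun τ) (n + 1) + stepVal s = 0 <;>
    by_cases h2 : ht (extFun τ) (n + 1) + stepVal s = (w : ℤ) <;>
    by_cases h3 : extFun τ n = s <;>
    simp [h1, h2, h3] <;> ring

end Aux

section Main
variable {c : ℝ} (hc : 0 < c) {w : ℕ} (hw : 3 ≤ w)

lemma eigen (hc : 0 < c) (hw : 3 ≤ w) (h : ℤ) (h0 : 0 ≤ h) (h1 : h ≤ (w : ℤ)) (t : Bool) :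
    (∑ s : Bool,
      if 0 ≤ h + stepVal s ∧ h + stepVal s ≤ (w : ℤ) then
        (if h + stepVal s = 0 then c + 1 else 1) * (if h + stepVal s = (w : ℤ) then c + 1 else 1)
          * (if t = s then c else 1) * rvec c w (h + stepVal s) s
      else 0) = (c + 1) * rvec c w h t := by
  have hc1 : c + 1 ≠ 0 := by positivity
  have hw3 : (3 : ℤ) ≤ (w : ℤ) := by exact_mod_cast hw
  rw [Fintype.sum_bool]
  simp only [show stepVal true = 1 from rfl, show stepVal false = -1 from rfl]
  rcases eq_or_ne h 0 with rfl | hb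
  · -- bottom wall : only the up step is allowed
    rw [if_pos (show (0:ℤ) ≤ 0 + 1 ∧ (0:ℤ) + 1 ≤ (w:ℤ) by omega),
      if_neg (show ¬ ((0:ℤ) ≤ 0 + -1 ∧ (0:ℤ) + -1 ≤ (w:ℤ)) by omega),
      if_neg (show ¬ ((0:ℤ) + 1 = 0) by omega),
      if_neg (show ¬ ((0:ℤ) + 1 = (w:ℤ)) by omega)]
    have e1 : rvec c w ((0:ℤ) + 1) true = 1 := by
      unfold rvec
      rw [if_neg (by simp), if_neg (by simp <;> omega), if_neg (by push_neg; omega)]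
    rw [e1]
    cases t
    · rw [if_neg (by simp)]
      unfold rvec
      rw [if_neg (by simp), if_neg (by omega), if_pos (Or.inl rfl)]
      field_simp
      ring
    · rw [if_pos rfl]
      unfold rvec
      rw [if_pos ⟨rfl, rfl⟩]
      field_simp
      ring
  rcases eq_or_ne h (w : ℤ) with rfl | ht'
  · -- top wall : only the down step is allowed
    rw [if_neg (show ¬ ((0:ℤ) ≤ (w:ℤ) + 1 ∧ (w:ℤ) + 1 ≤ (w:ℤ)) by omega),
      if_pos (show (0:ℤ) ≤ (w:ℤ) + -1 ∧ (w:ℤ) + -1 ≤ (w:ℤ) by omega),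
      if_neg (show ¬ ((w:ℤ) + -1 = 0) by omega),
      if_neg (show ¬ ((w:ℤ) + -1 = (w:ℤ)) by omega)]
    have e1 : rvec c w ((w:ℤ) + -1) false = 1 := by
      unfold rvec
      rw [if_neg (by simp), if_neg (by simp <;> omega), if_neg (by push_neg; omega)]
    rw [e1]
    cases t
    · rw [if_pos rfl]
      unfold rvec
      rw [if_neg (by simp <;> omega), if_pos ⟨rfl, rfl⟩]
      field_simp
      ring
    · rw [if_neg (by simp)]
      unfold rvec
      rw [if_neg (by simp <;> omega), if_neg (by simp), if_pos (Or.inr rfl)]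
      field_simp
      ring
  · -- interior : both steps are allowed and each contributes its bare factor
    have hbi : 0 < h := lt_of_le_of_ne h0 (Ne.symm hb)
    have hti : h < (w : ℤ) := lt_of_le_of_ne h1 ht'
    rw [if_pos (show (0:ℤ) ≤ h + 1 ∧ h + 1 ≤ (w:ℤ) by omega),
      if_pos (show (0:ℤ) ≤ h + -1 ∧ h + -1 ≤ (w:ℤ) by omega),
      if_neg (show ¬ (h + 1 = 0) by omega),
      if_neg (show ¬ (h + -1 = (w:ℤ)) by omega)]
    have erh : rvec c w h t = 1 := by
      unfold rvec
      rw [if_neg (by simp [hb]), if_neg (by simp [ht']), if_neg (by push_neg; exact ⟨hb, ht'⟩)]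
    rw [erh]
    have eup : (if h + 1 = (w:ℤ) then c + 1 else 1) * rvec c w (h + 1) true = 1 := by
      rcases eq_or_ne (h + 1) (w : ℤ) with hcase | hcase
      · rw [if_pos hcase]
        unfold rvec
        rw [if_neg (by simp <;> omega), if_neg (by simp), if_pos (Or.inr hcase)]
        field_simp
      · rw [if_neg hcase]
        unfold rvec
        rw [if_neg (by simp <;> omega), if_neg (by simp), if_neg (by push_neg; exact ⟨by omega, hcase⟩)]
        rw [mul_one]
    have edn : (if h + -1 = 0 then c + 1 else 1) * rvec c w (h + -1) false = 1 := by
      rcases eq_or_ne (h + -1) (0 : ℤ) with hcase | hcase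
      · rw [if_pos hcase]
        unfold rvec
        rw [if_neg (by simp), if_neg (by simp <;> omega), if_pos (Or.inl hcase)]
        field_simp
      · rw [if_neg hcase]
        unfold rvec
        rw [if_neg (by simp), if_neg (by simp <;> omega), if_neg (by push_neg; exact ⟨hcase, by omega⟩)]
        rw [mul_one]
    cases t
    · rw [if_neg (show ¬ (false = true) by simp), if_pos (show false = false from rfl)]
      linear_combination eup + c * edn
    · rw [if_pos (show true = true from rfl), if_neg (show ¬ (true = false) by simp)]
      linear_combination c * eup + edn

lemma key_step (hc : 0 < c) (hw : 3 ≤ w) (n : ℕ) (τ : Fin (n + 1) → Bool) :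
    (∑ x : Bool,
      if IsWalk w (n + 2) (extFun (Fin.snoc τ x)) then
        wt w (n + 2) (c + 1) (c + 1) c (extFun (Fin.snoc τ x))
          * rvec c w (ht (extFun (Fin.snoc τ x)) (n + 2)) (extFun (Fin.snoc τ x) (n + 1))
      else 0)
      = (c + 1) *
        (if IsWalk w (n + 1) (extFun τ) then
          wt w (n + 1) (c + 1) (c + 1) c (extFun τ)
            * rvec c w (ht (extFun τ) (n + 1)) (extFun τ n)
        else 0) := by
  by_cases hτ : IsWalk w (n + 1) (extFun τ)
  · obtain ⟨hh0, hh1⟩ := hτ (n + 1) le_rfl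
    rw [if_pos hτ]
    have hterm : ∀ x : Bool,
        (if IsWalk w (n + 2) (extFun (Fin.snoc τ x)) then
          wt w (n + 2) (c + 1) (c + 1) c (extFun (Fin.snoc τ x))
            * rvec c w (ht (extFun (Fin.snoc τ x)) (n + 2)) (extFun (Fin.snoc τ x) (n + 1))
        else 0)
        = wt w (n + 1) (c + 1) (c + 1) c (extFun τ) *
          (if 0 ≤ ht (extFun τ) (n + 1) + stepVal x ∧
              ht (extFun τ) (n + 1) + stepVal x ≤ (w : ℤ) then
            (if ht (extFun τ) (n + 1) + stepVal x = 0 then c + 1 else 1)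
              * (if ht (extFun τ) (n + 1) + stepVal x = (w : ℤ) then c + 1 else 1)
              * (if extFun τ n = x then c else 1)
              * rvec c w (ht (extFun τ) (n + 1) + stepVal x) x
          else 0) := by
      intro x
      have hend : ht (extFun (Fin.snoc τ x)) (n + 2)
          = ht (extFun τ) (n + 1) + stepVal x := by
        rw [ht_succ, ht_snoc τ x le_rfl, extFun_snoc_self]
      by_cases hcond : 0 ≤ ht (extFun τ) (n + 1) + stepVal x ∧
          ht (extFun τ) (n + 1) + stepVal x ≤ (w : ℤ)
      · rw [if_pos ((isWalk_snoc τ x).mpr ⟨hτ, hcond⟩), if_pos hcond,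
          wt_snoc c τ x, hend, extFun_snoc_self]
        ring
      · rw [if_neg (fun hW => hcond ((isWalk_snoc τ x).mp hW).2), if_neg hcond, mul_zero]
    calc (∑ x : Bool,
        if IsWalk w (n + 2) (extFun (Fin.snoc τ x)) then
          wt w (n + 2) (c + 1) (c + 1) c (extFun (Fin.snoc τ x))
            * rvec c w (ht (extFun (Fin.snoc τ x)) (n + 2)) (extFun (Fin.snoc τ x) (n + 1))
        else 0)
        = ∑ x : Bool, wt w (n + 1) (c + 1) (c + 1) c (extFun τ) *
          (if 0 ≤ ht (extFun τ) (n + 1) + stepVal x ∧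
              ht (extFun τ) (n + 1) + stepVal x ≤ (w : ℤ) then
            (if ht (extFun τ) (n + 1) + stepVal x = 0 then c + 1 else 1)
              * (if ht (extFun τ) (n + 1) + stepVal x = (w : ℤ) then c + 1 else 1)
              * (if extFun τ n = x then c else 1)
              * rvec c w (ht (extFun τ) (n + 1) + stepVal x) x
          else 0) := Finset.sum_congr rfl (fun x _ => hterm x)
      _ = wt w (n + 1) (c + 1) (c + 1) c (extFun τ) *
          ((c + 1) * rvec c w (ht (extFun τ) (n + 1)) (extFun τ n)) := by
          rw [← Finset.mul_sum, eigen hc hw _ hh0 hh1]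
      _ = (c + 1) * (wt w (n + 1) (c + 1) (c + 1) c (extFun τ)
            * rvec c w (ht (extFun τ) (n + 1)) (extFun τ n)) := by ring
  · rw [if_neg hτ, mul_zero]
    refine Finset.sum_eq_zero fun x _ => ?_
    rw [if_neg (fun hW => hτ ((isWalk_snoc τ x).mp hW).1)]

lemma G_succ (hc : 0 < c) (hw : 3 ≤ w) (n : ℕ) : G c w (n + 1) = (c + 1) * G c w n := by
  unfold G
  rw [← Equiv.sum_comp (Fin.snocEquiv (fun _ : Fin (n + 2) => Bool))
    (fun σ : Fin (n + 2) → Bool =>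
      if IsWalk w (n + 2) (extFun σ) then
        wt w (n + 2) (c + 1) (c + 1) c (extFun σ)
          * rvec c w (ht (extFun σ) (n + 2)) (extFun σ (n + 1))
      else 0)]
  rw [Fintype.sum_prod_type, Finset.sum_comm, Finset.mul_sum]
  exact Finset.sum_congr rfl fun τ _ => key_step hc hw n τ

lemma G_zero (hc : 0 < c) (hw : 3 ≤ w) : G c w 0 = 1 := by
  unfold G
  rw [← Equiv.sum_comp (Equiv.funUnique (Fin 1) Bool).symm
    (fun σ : Fin 1 → Bool =>
      if IsWalk w 1 (extFun σ) then
        wt w 1 (c + 1) (c + 1) c (extFun σ) * rvec c w (ht (extFun σ) 1) (extFun σ 0)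
      else 0), Fintype.sum_bool]
  have hw1 : (1 : ℤ) ≤ (w : ℤ) := by exact_mod_cast (by omega : 1 ≤ w)
  have hup : ∀ b : Bool, extFun ((Equiv.funUnique (Fin 1) Bool).symm b) 0 = b := by
    intro b; rfl
  have hht : ∀ b : Bool, ht (extFun ((Equiv.funUnique (Fin 1) Bool).symm b)) 1 = stepVal b := by
    intro b
    show (∑ i ∈ Finset.range 1, stepVal (extFun ((Equiv.funUnique (Fin 1) Bool).symm b) i))
        = stepVal b
    rw [Finset.sum_range_one, hup]
  have hWt : IsWalk w 1 (extFun ((Equiv.funUnique (Fin 1) Bool).symm true)) := by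
    intro k hk
    interval_cases k
    · simp [ht]
    · rw [hht true]; exact ⟨by norm_num [stepVal], by rw [show stepVal true = 1 from rfl]; omega⟩
  have hWf : ¬ IsWalk w 1 (extFun ((Equiv.funUnique (Fin 1) Bool).symm false)) := by
    intro H
    have := (H 1 le_rfl).1
    rw [hht false] at this
    norm_num [stepVal] at this
  rw [if_pos hWt, if_neg hWf, add_zero, hht true, hup true]
  have hwt1 : wt w 1 (c + 1) (c + 1) c (extFun ((Equiv.funUnique (Fin 1) Bool).symm true)) = 1 := by
    unfold wt ma mb mc
    have h0 : ((Finset.Icc 1 1).filter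
        (fun k => ht (extFun ((Equiv.funUnique (Fin 1) Bool).symm true)) k = 0)) = ∅ := by
      apply Finset.filter_false_of_mem
      intro k hk
      have : k = 1 := by simpa using hk
      subst this
      rw [hht true]
      simp [stepVal]
    have h1 : ((Finset.Icc 1 1).filter
        (fun k => ht (extFun ((Equiv.funUnique (Fin 1) Bool).symm true)) k = (w : ℤ))) = ∅ := by
      apply Finset.filter_false_of_mem
      intro k hk
      have : k = 1 := by simpa using hk
      subst this
      rw [hht true]
      have : (3 : ℤ) ≤ (w : ℤ) := by exact_mod_cast hw
      simp only [stepVal, if_true]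
      omega
    rw [h0, h1]
    norm_num
  rw [hwt1, one_mul]
  unfold rvec
  rw [if_neg (by simp [show stepVal true = (1 : ℤ) from rfl]),
    if_neg (by simp),
    if_neg (by
      simp only [show stepVal true = (1 : ℤ) from rfl]
      have h3 : (3 : ℤ) ≤ (w : ℤ) := by exact_mod_cast hw
      omega)]

lemma G_eq (hc : 0 < c) (hw : 3 ≤ w) (n : ℕ) : G c w n = (c + 1) ^ n := by
  induction n with
  | zero => rw [G_zero hc hw, pow_zero]
  | succ n ih => rw [G_succ hc hw n, ih, pow_succ]; ring

lemma rvec_le_one (hc : 0 < c) (h : ℤ) (s : Bool) : rvec c w h s ≤ 1 := by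
  have h1 : (0 : ℝ) < c + 1 := by linarith
  unfold rvec
  split_ifs
  · rw [div_le_one h1]; linarith
  · rw [div_le_one h1]; linarith
  · rw [div_le_one h1]; linarith
  · exact le_refl 1

lemma rvec_ge (hc : 0 < c) (h : ℤ) (s : Bool) : min c 1 / (c + 1) ≤ rvec c w h s := by
  have h1 : (0 : ℝ) < c + 1 := by linarith
  have hm1 : min c 1 ≤ 1 := min_le_right c 1
  have hmc : min c 1 ≤ c := min_le_left c 1
  unfold rvec
  split_ifs
  · exact (div_le_div_iff_of_pos_right h1).mpr hmc
  · exact (div_le_div_iff_of_pos_right h1).mpr hmc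
  · exact (div_le_div_iff_of_pos_right h1).mpr hm1
  · rw [div_le_one h1]; linarith

lemma wt_pos (hc : 0 < c) (n : ℕ) (φ : ℕ → Bool) : 0 < wt w n (c + 1) (c + 1) c φ := by
  unfold wt
  have h1 : (0 : ℝ) < c + 1 := by linarith
  positivity

lemma Z_expand (n : ℕ) : Z w n (c + 1) (c + 1) c =
    ∑ σ : Fin n → Bool,
      (if IsWalk w n (extFun σ) then wt w n (c + 1) (c + 1) c (extFun σ) else 0) := by
  unfold Z
  rw [Finset.sum_filter]

lemma Z_ge (hc : 0 < c) (hw : 3 ≤ w) (n : ℕ) :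
    (c + 1) ^ n ≤ Z w (n + 1) (c + 1) (c + 1) c := by
  rw [← G_eq hc hw n, Z_expand]
  unfold G
  apply Finset.sum_le_sum
  intro σ _
  by_cases hW : IsWalk w (n + 1) (extFun σ)
  · rw [if_pos hW, if_pos hW]
    exact mul_le_of_le_one_right (le_of_lt (wt_pos hc (n + 1) (extFun σ)))
      (rvec_le_one hc _ _)
  · rw [if_neg hW, if_neg hW]

lemma Z_le (hc : 0 < c) (hw : 3 ≤ w) (n : ℕ) :
    Z w (n + 1) (c + 1) (c + 1) c ≤ (c + 1) ^ n / (min c 1 / (c + 1)) := by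
  have hm : (0 : ℝ) < min c 1 / (c + 1) := by positivity
  rw [le_div_iff₀ hm, ← G_eq hc hw n, Z_expand, Finset.sum_mul]
  unfold G
  apply Finset.sum_le_sum
  intro σ _
  by_cases hW : IsWalk w (n + 1) (extFun σ)
  · rw [if_pos hW, if_pos hW]
    have := mul_le_mul_of_nonneg_left
      (rvec_ge (w := w) hc (ht (extFun σ) (n + 1)) (extFun σ n))
      (le_of_lt (wt_pos (w := w) hc (n + 1) (extFun σ)))
    linarith
  · rw [if_neg hW, if_neg hW, zero_mul]

end Main

/-- on the symmetric zero-force curve `a = b = c+1` the free energy equals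
`log(c+1)`, independently of the width. -/
theorem symmetric_zero_force_curve (c : ℝ) (hc : 0 < c) (w : ℕ) (hw : 3 ≤ w) (κ : ℝ)
    (hκ : Tendsto (fun n : ℕ => Real.log (Z w n (c + 1) (c + 1) c) / (n : ℝ)) atTop
      (nhds κ)) :
    κ = Real.log (c + 1) := by
  have hC : (0 : ℝ) < c + 1 := by linarith
  have hC1 : (1 : ℝ) < c + 1 := by linarith
  set L := Real.log (c + 1) with hLdef
  have hL0 : 0 < L := Real.log_pos hC1
  have hm : (0 : ℝ) < min c 1 / (c + 1) := by positivity
  set B := -Real.log (min c 1 / (c + 1)) with hBdef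
  have hB0 : 0 ≤ B := by
    have h1 : min c 1 / (c + 1) ≤ 1 := by
      rw [div_le_one hC]
      have := min_le_right c 1
      linarith
    have := Real.log_nonpos (le_of_lt hm) h1
    rw [hBdef]
    linarith
  have hlim : Filter.Tendsto (fun n : ℕ => Real.log (Z w n (c + 1) (c + 1) c) / (n : ℝ))
      Filter.atTop (nhds L) := by
    apply tendsto_of_tendsto_of_tendsto_of_le_of_le'
      (g := fun n : ℕ => L - L * (1 / (n : ℝ))) (h := fun n : ℕ => L + B * (1 / (n : ℝ)))
    · simpa using tendsto_const_nhds.sub (tendsto_one_div_atTop_nhds_zero_nat.const_mul L)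
    · simpa using tendsto_const_nhds.add (tendsto_one_div_atTop_nhds_zero_nat.const_mul B)
    · filter_upwards [Filter.eventually_ge_atTop 1] with n hn
      obtain ⟨k, rfl⟩ : ∃ k, n = k + 1 := ⟨n - 1, by omega⟩
      have hZpos : 0 < Z w (k + 1) (c + 1) (c + 1) c :=
        lt_of_lt_of_le (pow_pos hC k) (Z_ge hc hw k)
      have hlow : (k : ℝ) * L ≤ Real.log (Z w (k + 1) (c + 1) (c + 1) c) := by
        rw [hLdef, ← Real.log_pow]
        exact (Real.log_le_log_iff (pow_pos hC k) hZpos).mpr (Z_ge hc hw k)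
      have hn' : (0 : ℝ) < ((k : ℕ) + 1 : ℕ) := by positivity
      rw [le_div_iff₀ hn']
      have hcast : (((k : ℕ) + 1 : ℕ) : ℝ) = (k : ℝ) + 1 := by push_cast; ring
      have hne : ((k : ℝ) + 1) ≠ 0 := by positivity
      have heq : (L - L * (1 / (((k : ℕ) + 1 : ℕ) : ℝ))) * (((k : ℕ) + 1 : ℕ) : ℝ)
          = (k : ℝ) * L := by
        rw [hcast]
        field_simp
        ring
      rw [heq]
      exact hlow
    · filter_upwards [Filter.eventually_ge_atTop 1] with n hn
      obtain ⟨k, rfl⟩ : ∃ k, n = k + 1 := ⟨n - 1, by omega⟩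
      have hZpos : 0 < Z w (k + 1) (c + 1) (c + 1) c :=
        lt_of_lt_of_le (pow_pos hC k) (Z_ge hc hw k)
      have hpos2 : (0 : ℝ) < (c + 1) ^ k / (min c 1 / (c + 1)) := by positivity
      have hup : Real.log (Z w (k + 1) (c + 1) (c + 1) c) ≤ (k : ℝ) * L + B := by
        have h2 := (Real.log_le_log_iff hZpos hpos2).mpr (Z_le hc hw k)
        rw [Real.log_div (pow_pos hC k).ne' hm.ne', Real.log_pow] at h2
        rw [hBdef]
        linarith
      have hn' : (0 : ℝ) < ((k : ℕ) + 1 : ℕ) := by positivity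
      rw [div_le_iff₀ hn']
      have hcast : (((k : ℕ) + 1 : ℕ) : ℝ) = (k : ℝ) + 1 := by push_cast; ring
      have heq : (L + B * (1 / (((k : ℕ) + 1 : ℕ) : ℝ))) * (((k : ℕ) + 1 : ℕ) : ℝ)
          = ((k : ℝ) + 1) * L + B := by
        rw [hcast]
        field_simp
      rw [heq]
      nlinarith [hL0]
  exact tendsto_nhds_unique hκ hlim
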